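/- arXiv:1910.06798 — 2 statements merged into one kernel-verified Lean document; each statement's English description precedes it below -/
import Mathlib

section
/- If u ∈ 𝒱 and w ∈ 𝒱, then u·w ∈ 𝒱; that is, if u and w are value functions of polynomial games, then so is the pointwise product z ↦ u(z)·w(z). -/
open Polynomial

/-- The value of a finite two-player zero-sum matrix game with payoff matrix `G`:
`sup` over mixed strategies of Player 1 of `inf` over mixed strategies of Player 2
of the expected payoff. -/
noncomputable def matrixValue {A B : Type} [Fintype A] [Fintype B] (G : A → B → ℝ) : ℝ :=
  ⨆ x : stdSimplex ℝ A, ⨅ y : stdSimplex ℝ B, ∑ a : A, ∑ b : B, x.1 a * G a b * y.1 b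

section Infra
variable {A B : Type} [Fintype A] [Fintype B] [Nonempty A] [Nonempty B]

/-- worst case payoff for player 1's strategy x -/
noncomputable def minRow (F : A → B → ℝ) (x : A → ℝ) : ℝ :=
  Finset.univ.inf' Finset.univ_nonempty (fun b => ∑ a : A, x a * F a b)

/-- best case payoff against player 2's strategy y -/
noncomputable def maxCol (F : A → B → ℝ) (y : B → ℝ) : ℝ :=
  Finset.univ.sup' Finset.univ_nonempty (fun a => ∑ b : B, F a b * y b)

noncomputable def lowerVal (F : A → B → ℝ) : ℝ := ⨆ x : stdSimplex ℝ A, minRow F x.1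
noncomputable def upperVal (F : A → B → ℝ) : ℝ := ⨅ y : stdSimplex ℝ B, maxCol F y.1

instance stdSimplex.nonempty' {ι : Type} [Fintype ι] [Nonempty ι] :
    Nonempty (stdSimplex ℝ ι) := by
  classical
  exact ⟨⟨_, ite_eq_mem_stdSimplex ℝ (Classical.arbitrary ι)⟩⟩

lemma payoff_eq₁ (F : A → B → ℝ) (x : A → ℝ) (y : B → ℝ) :
    ∑ a : A, ∑ b : B, x a * F a b * y b = ∑ b : B, (∑ a : A, x a * F a b) * y b := by
  rw [Finset.sum_comm]
  simp [Finset.sum_mul]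

lemma payoff_eq₂ (F : A → B → ℝ) (x : A → ℝ) (y : B → ℝ) :
    ∑ a : A, ∑ b : B, x a * F a b * y b = ∑ a : A, x a * ∑ b : B, F a b * y b := by
  simp [Finset.mul_sum, mul_assoc]

lemma minRow_le_payoff {F : A → B → ℝ} {x : A → ℝ} {y : B → ℝ} (hy : y ∈ stdSimplex ℝ B) :
    minRow F x ≤ ∑ a : A, ∑ b : B, x a * F a b * y b := by
  rw [payoff_eq₁]
  calc minRow F x = ∑ b : B, minRow F x * y b := by
        rw [← Finset.mul_sum, hy.2, mul_one]
      _ ≤ _ := Finset.sum_le_sum fun b _ =>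
          mul_le_mul_of_nonneg_right (Finset.inf'_le _ (Finset.mem_univ b)) (hy.1 b)

lemma payoff_le_maxCol {F : A → B → ℝ} {x : A → ℝ} {y : B → ℝ} (hx : x ∈ stdSimplex ℝ A) :
    ∑ a : A, ∑ b : B, x a * F a b * y b ≤ maxCol F y := by
  rw [payoff_eq₂]
  calc ∑ a : A, x a * ∑ b : B, F a b * y b
      ≤ ∑ a : A, x a * maxCol F y := Finset.sum_le_sum fun a _ =>
        mul_le_mul_of_nonneg_left
          (Finset.le_sup' (fun a => ∑ b : B, F a b * y b) (Finset.mem_univ a)) (hx.1 a)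
    _ = maxCol F y := by rw [← Finset.sum_mul, hx.2, one_mul]

lemma iInf_payoff_eq (F : A → B → ℝ) (x : A → ℝ) :
    ⨅ y : stdSimplex ℝ B, ∑ a : A, ∑ b : B, x a * F a b * y.1 b = minRow F x := by
  classical
  refine le_antisymm ?_ (le_ciInf fun y => minRow_le_payoff y.2)
  obtain ⟨b₀, -, hb₀⟩ := Finset.exists_mem_eq_inf' (Finset.univ_nonempty)
      (fun b => ∑ a : A, x a * F a b)
  have hv : ((fun b => if b₀ = b then (1:ℝ) else 0)) ∈ stdSimplex ℝ B :=
    ite_eq_mem_stdSimplex ℝ b₀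
  refine le_trans (ciInf_le ⟨minRow F x, ?_⟩ ⟨_, hv⟩) ?_
  · rintro r ⟨y, rfl⟩; exact minRow_le_payoff y.2
  · rw [payoff_eq₁, minRow, hb₀]
    apply le_of_eq
    simp [mul_ite]

lemma matrixValue_eq_lowerVal (F : A → B → ℝ) : matrixValue F = lowerVal F := by
  unfold matrixValue lowerVal
  exact iSup_congr fun x => iInf_payoff_eq F x.1

lemma bddAbove_minRow (F : A → B → ℝ) :
    BddAbove (Set.range fun x : stdSimplex ℝ A => minRow F x.1) := by
  classical
  obtain ⟨b₀⟩ := (inferInstance : Nonempty B)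
  refine ⟨Finset.univ.sup' Finset.univ_nonempty (fun a => F a b₀), ?_⟩
  rintro r ⟨x, rfl⟩
  calc minRow F x.1 ≤ ∑ a : A, x.1 a * F a b₀ := Finset.inf'_le _ (Finset.mem_univ b₀)
    _ ≤ ∑ a : A, x.1 a * Finset.univ.sup' Finset.univ_nonempty (fun a => F a b₀) :=
        Finset.sum_le_sum fun a _ => mul_le_mul_of_nonneg_left
          (Finset.le_sup' (fun a => F a b₀) (Finset.mem_univ a)) (x.2.1 a)
    _ = _ := by rw [← Finset.sum_mul, x.2.2, one_mul]

lemma bddBelow_maxCol (F : A → B → ℝ) :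
    BddBelow (Set.range fun y : stdSimplex ℝ B => maxCol F y.1) := by
  classical
  obtain ⟨a₀⟩ := (inferInstance : Nonempty A)
  refine ⟨Finset.univ.inf' Finset.univ_nonempty (fun b => F a₀ b), ?_⟩
  rintro r ⟨y, rfl⟩
  refine le_trans ?_ (Finset.le_sup' (fun a => ∑ b : B, F a b * y.1 b) (Finset.mem_univ a₀))
  calc Finset.univ.inf' Finset.univ_nonempty (fun b => F a₀ b)
      = ∑ b : B, Finset.univ.inf' Finset.univ_nonempty (fun b => F a₀ b) * y.1 b := by
        rw [← Finset.mul_sum, y.2.2, mul_one]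
    _ ≤ ∑ b : B, F a₀ b * y.1 b := Finset.sum_le_sum fun b _ =>
        mul_le_mul_of_nonneg_right (Finset.inf'_le _ (Finset.mem_univ b)) (y.2.1 b)

lemma lowerVal_le_upperVal (F : A → B → ℝ) : lowerVal F ≤ upperVal F :=
  ciSup_le fun x => le_ciInf fun y =>
    le_trans (minRow_le_payoff y.2) (payoff_le_maxCol x.2)

/-- Von Neumann's minimax theorem for matrix games, via Hahn–Banach separation. -/
theorem minimax (F : A → B → ℝ) : lowerVal F = upperVal F := by
  classical
  refine le_antisymm (lowerVal_le_upperVal F) ?_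
  refine le_of_forall_pos_le_add fun ε hε => ?_
  -- the linear map y ↦ F y
  let L : (B → ℝ) →ₗ[ℝ] (A → ℝ) :=
    { toFun := fun y a => ∑ b : B, F a b * y b
      map_add' := by
        intro y y'; funext a; simp [mul_add, Finset.sum_add_distrib]
      map_smul' := by
        intro c y; funext a; simp [Finset.mul_sum, mul_left_comm] }
  set v := upperVal F with hv
  set p : A → ℝ := fun _ => v - ε with hp
  set S : Set (A → ℝ) := L '' stdSimplex ℝ B with hS
  set Q : Set (A → ℝ) := Set.pi Set.univ (fun a => Set.Iic (p a)) with hQ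
  have hSconv : Convex ℝ S := (convex_stdSimplex ℝ B).linear_image L
  have hScomp : IsCompact S := (isCompact_stdSimplex ℝ B).image L.continuous_on_pi
  have hQconv : Convex ℝ Q := convex_pi fun a _ => convex_Iic _
  have hQclosed : IsClosed Q := isClosed_set_pi fun a _ => isClosed_Iic
  have hdisj : Disjoint S Q := by
    rw [Set.disjoint_left]
    rintro c ⟨y, hy, rfl⟩ hcQ
    have h1 : maxCol F y ≤ v - ε := by
      refine Finset.sup'_le _ _ fun a _ => ?_
      exact hcQ a (Set.mem_univ a)
    have h2 : v ≤ maxCol F y := ciInf_le (bddBelow_maxCol F) (⟨y, hy⟩ : stdSimplex ℝ B)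
    linarith
  obtain ⟨f, u, v', hfS, huv, hfQ⟩ :=
    geometric_hahn_banach_compact_closed hSconv hScomp hQconv hQclosed hdisj
  -- coordinates of f
  set g : A → ℝ := fun a => f (fun j => if a = j then 1 else 0) with hg
  have hf_eq : ∀ c : A → ℝ, f c = ∑ a : A, c a * g a := by
    intro c
    conv_lhs => rw [pi_eq_sum_univ c]
    rw [map_sum]
    exact Finset.sum_congr rfl fun a _ => by rw [map_smul]; simp [hg]
  have hpQ : p ∈ Q := fun a _ => Set.mem_Iic.2 (le_refl _)
  -- each g a ≤ 0
  have hg_nonpos : ∀ a, g a ≤ 0 := by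
    intro a
    by_contra h
    push_neg at h
    have hfp0 : v' < f p := hfQ p hpQ
    set t : ℝ := (f p - v') / g a + 1 with ht
    have htpos : 0 < t := by
      have h0 : 0 ≤ (f p - v') / g a := div_nonneg (by linarith) h.le
      rw [ht]; linarith
    have hmem : (p - t • fun j => if a = j then (1:ℝ) else 0) ∈ Q := by
      intro a' _
      simp only [Pi.sub_apply, Pi.smul_apply, smul_eq_mul]
      by_cases ha : a = a' <;> simp [ha, hp]
      · nlinarith
    have hlt := hfQ _ hmem
    rw [map_sub, map_smul] at hlt
    simp only [smul_eq_mul] at hlt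
    have hga : (f fun j => if a = j then (1:ℝ) else 0) = g a := rfl
    rw [hga] at hlt
    have h2 : t * g a < f p - v' := by linarith
    rw [ht] at h2
    have h3 : ((f p - v') / g a + 1) * g a = (f p - v') + g a := by
      field_simp
    nlinarith
  set x : A → ℝ := fun a => -g a with hx
  have hx_nonneg : ∀ a, 0 ≤ x a := fun a => neg_nonneg.2 (hg_nonpos a)
  set σ : ℝ := ∑ a : A, x a with hσ
  have hσ_nonneg : 0 ≤ σ := Finset.sum_nonneg fun a _ => hx_nonneg a
  -- f on vertices of S
  have hvert : ∀ b : B, (∑ a : A, F a b * g a) < u := by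
    intro b
    have hmem : (L fun j => if b = j then (1:ℝ) else 0) ∈ S :=
      ⟨_, ite_eq_mem_stdSimplex ℝ b, rfl⟩
    have := hfS _ hmem
    rw [hf_eq] at this
    convert this using 2 with a
    simp [L, mul_ite]
  have hfp : v' < f p := hfQ p hpQ
  have hfp_eq : f p = -((v - ε) * σ) := by
    rw [hf_eq]
    simp only [hp, hσ, hx]
    rw [Finset.mul_sum, ← Finset.sum_neg_distrib]
    exact Finset.sum_congr rfl fun a _ => by ring
  have hσ_pos : 0 < σ := by
    rcases lt_or_eq_of_le hσ_nonneg with h | h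
    · exact h
    · exfalso
      have hz : ∀ a, g a = 0 := by
        intro a
        have : ∀ a ∈ Finset.univ, x a = 0 :=
          (Finset.sum_eq_zero_iff_of_nonneg fun a _ => hx_nonneg a).1 h.symm
        have := this a (Finset.mem_univ a)
        simp [hx] at this; linarith [this]
      obtain ⟨b⟩ := (inferInstance : Nonempty B)
      have h1 := hvert b
      simp [hz] at h1
      have h2 : f p = 0 := by rw [hf_eq]; simp [hz]
      linarith [hfp]
  -- normalized strategy
  set x' : A → ℝ := fun a => x a / σ with hx'
  have hx'mem : x' ∈ stdSimplex ℝ A := by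
    constructor
    · exact fun a => div_nonneg (hx_nonneg a) hσ_pos.le
    · rw [← Finset.sum_div, ← hσ, div_self hσ_pos.ne']
  have hrow : ∀ b : B, v - ε ≤ ∑ a : A, x' a * F a b := by
    intro b
    have h1 : -u < ∑ a : A, x a * F a b := by
      have := hvert b
      have heq : ∑ a : A, x a * F a b = -∑ a : A, F a b * g a := by
        rw [← Finset.sum_neg_distrib]
        exact Finset.sum_congr rfl fun a _ => by simp [hx]; ring
      rw [heq]; linarith
    have h2 : (v - ε) * σ < -v' := by
      have := hfp
      rw [hfp_eq] at this
      linarith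
    have h3 : (v - ε) * σ < ∑ a : A, x a * F a b := by linarith
    have h4 : (∑ a : A, x' a * F a b) * σ = ∑ a : A, x a * F a b := by
      rw [Finset.sum_mul]
      refine Finset.sum_congr rfl fun a _ => ?_
      rw [hx']
      field_simp
    rw [← h4] at h3
    exact le_of_lt (lt_of_mul_lt_mul_right h3 hσ_pos.le)
  have hminrow : v - ε ≤ minRow F x' :=
    Finset.le_inf' _ _ fun b _ => hrow b
  have : v - ε ≤ lowerVal F :=
    le_trans hminrow (le_ciSup (bddAbove_minRow F) (⟨x', hx'mem⟩ : stdSimplex ℝ A))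
  linarith

lemma matrixValue_eq_upperVal (F : A → B → ℝ) : matrixValue F = upperVal F := by
  rw [matrixValue_eq_lowerVal, minimax]

/-- product of two mixed strategies -/
lemma prod_mem_stdSimplex {C : Type} [Fintype C] {x : A → ℝ} {x' : C → ℝ}
    (hx : x ∈ stdSimplex ℝ A) (hx' : x' ∈ stdSimplex ℝ C) :
    (fun p : A × C => x p.1 * x' p.2) ∈ stdSimplex ℝ (A × C) := by
  constructor
  · exact fun p => mul_nonneg (hx.1 p.1) (hx'.1 p.2)
  · rw [Fintype.sum_prod_type, ← Finset.sum_mul_sum, hx.2, hx'.2, one_mul]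

end Infra

section Combine
variable {ι κ : Type} [Nonempty ι] [Nonempty κ]

lemma sup_add_combine {f : ι → ℝ} {g : κ → ℝ} {V : ℝ}
    (h : ∀ i j, f i + g j ≤ V) : (⨆ i, f i) + ⨆ j, g j ≤ V := by
  have h1 : ∀ i, f i ≤ V - ⨆ j, g j := fun i => by
    have : (⨆ j, g j) ≤ V - f i := ciSup_le fun j => by linarith [h i j]
    linarith
  have := ciSup_le h1
  linarith

lemma inf_add_combine {f : ι → ℝ} {g : κ → ℝ} {V : ℝ}
    (h : ∀ i j, V ≤ f i + g j) : V ≤ (⨅ i, f i) + ⨅ j, g j := by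
  have h1 : ∀ i, V - ⨅ j, g j ≤ f i := fun i => by
    have : V - f i ≤ ⨅ j, g j := le_ciInf fun j => by linarith [h i j]
    linarith
  have := le_ciInf h1
  linarith

lemma sup_mul_combine {f : ι → ℝ} {g : κ → ℝ} {V : ℝ}
    (hf : ∀ i, 0 ≤ f i) (hg : ∀ j, 0 ≤ g j)
    (bf : BddAbove (Set.range f)) (bg : BddAbove (Set.range g))
    (h : ∀ i j, f i * g j ≤ V) : (⨆ i, f i) * ⨆ j, g j ≤ V := by
  obtain ⟨i₀⟩ := (inferInstance : Nonempty ι)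
  obtain ⟨j₀⟩ := (inferInstance : Nonempty κ)
  have hV : 0 ≤ V := le_trans (mul_nonneg (hf i₀) (hg j₀)) (h i₀ j₀)
  have ha : 0 ≤ ⨆ i, f i := le_trans (hf i₀) (le_ciSup bf i₀)
  have step1 : ∀ j, (⨆ i, f i) * g j ≤ V := by
    intro j
    rcases eq_or_lt_of_le (hg j) with hj | hj
    · rw [← hj, mul_zero]; exact hV
    · rw [← le_div_iff₀ hj]
      exact ciSup_le fun i => (le_div_iff₀ hj).2 (h i j)
  rcases eq_or_lt_of_le ha with h0 | h0
  · rw [← h0, zero_mul]; exact hV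
  · rw [mul_comm, ← le_div_iff₀ h0]
    exact ciSup_le fun j => (le_div_iff₀ h0).2 (by rw [mul_comm]; exact step1 j)

lemma inf_mul_combine {f : ι → ℝ} {g : κ → ℝ} {V : ℝ}
    (hf : ∀ i, 0 ≤ f i) (hg : ∀ j, 0 ≤ g j)
    (h : ∀ i j, V ≤ f i * g j) : V ≤ (⨅ i, f i) * ⨅ j, g j := by
  obtain ⟨i₀⟩ := (inferInstance : Nonempty ι)
  obtain ⟨j₀⟩ := (inferInstance : Nonempty κ)
  have ha : 0 ≤ ⨅ i, f i := le_ciInf hf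
  have hb : 0 ≤ ⨅ j, g j := le_ciInf hg
  rcases le_or_gt V 0 with hV | hV
  · exact le_trans hV (mul_nonneg ha hb)
  have hgpos : ∀ j, 0 < g j := by
    intro j
    rcases eq_or_lt_of_le (hg j) with hj | hj
    · exfalso; have := h i₀ j; rw [← hj, mul_zero] at this; linarith
    · exact hj
  have step1 : ∀ j, V ≤ (⨅ i, f i) * g j := by
    intro j
    rw [← div_le_iff₀ (hgpos j)]
    exact le_ciInf fun i => (div_le_iff₀ (hgpos j)).2 (h i j)
  have hapos : 0 < ⨅ i, f i := by
    rcases eq_or_lt_of_le ha with h0 | h0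
    · exfalso; have := step1 j₀; rw [← h0, zero_mul] at this; linarith
    · exact h0
  rw [mul_comm, ← div_le_iff₀ hapos]
  exact le_ciInf fun j => (div_le_iff₀ hapos).2 (by rw [mul_comm]; exact step1 j)

end Combine

section Inf'
variable {ι : Type} [Fintype ι] [Nonempty ι]

lemma inf'_neg_eq (f : ι → ℝ) :
    Finset.univ.inf' Finset.univ_nonempty (fun i => -f i)
      = -Finset.univ.sup' Finset.univ_nonempty f := by
  refine le_antisymm ?_ (Finset.le_inf' _ _ fun i _ =>
    neg_le_neg (Finset.le_sup' f (Finset.mem_univ i)))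
  obtain ⟨i, -, hi⟩ := Finset.exists_mem_eq_sup' (Finset.univ_nonempty (α := ι)) f
  rw [hi]
  exact Finset.inf'_le _ (Finset.mem_univ i)

lemma inf'_const_mul (f : ι → ℝ) {c : ℝ} (hc : 0 ≤ c) :
    Finset.univ.inf' Finset.univ_nonempty (fun i => c * f i)
      = c * Finset.univ.inf' Finset.univ_nonempty f := by
  refine le_antisymm ?_ (Finset.le_inf' _ _ fun i _ =>
    mul_le_mul_of_nonneg_left (Finset.inf'_le f (Finset.mem_univ i)) hc)
  obtain ⟨i, -, hi⟩ := Finset.exists_mem_eq_inf' (Finset.univ_nonempty (α := ι)) f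
  rw [hi]
  exact Finset.inf'_le _ (Finset.mem_univ i)

lemma inf'_add_const (f : ι → ℝ) (c : ℝ) :
    Finset.univ.inf' Finset.univ_nonempty (fun i => f i + c)
      = Finset.univ.inf' Finset.univ_nonempty f + c := by
  refine le_antisymm ?_ (Finset.le_inf' _ _ fun i _ =>
    add_le_add_left (Finset.inf'_le f (Finset.mem_univ i)) c)
  obtain ⟨i, -, hi⟩ := Finset.exists_mem_eq_inf' (Finset.univ_nonempty (α := ι)) f
  rw [hi]
  exact Finset.inf'_le _ (Finset.mem_univ i)

variable {κ : Type} [Fintype κ] [Nonempty κ]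

lemma inf'_prod_add (f : ι → ℝ) (g : κ → ℝ) :
    Finset.univ.inf' Finset.univ_nonempty (fun q : ι × κ => f q.1 + g q.2)
      = Finset.univ.inf' Finset.univ_nonempty f
        + Finset.univ.inf' Finset.univ_nonempty g := by
  refine le_antisymm ?_ (Finset.le_inf' _ _ fun q _ =>
    add_le_add (Finset.inf'_le f (Finset.mem_univ q.1)) (Finset.inf'_le g (Finset.mem_univ q.2)))
  obtain ⟨i, -, hi⟩ := Finset.exists_mem_eq_inf' (Finset.univ_nonempty (α := ι)) f
  obtain ⟨j, -, hj⟩ := Finset.exists_mem_eq_inf' (Finset.univ_nonempty (α := κ)) g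
  rw [hi, hj]
  exact Finset.inf'_le _ (Finset.mem_univ (i, j))

lemma sup'_prod_add (f : ι → ℝ) (g : κ → ℝ) :
    Finset.univ.sup' Finset.univ_nonempty (fun q : ι × κ => f q.1 + g q.2)
      = Finset.univ.sup' Finset.univ_nonempty f
        + Finset.univ.sup' Finset.univ_nonempty g := by
  refine le_antisymm (Finset.sup'_le _ _ fun q _ =>
    add_le_add (Finset.le_sup' f (Finset.mem_univ q.1)) (Finset.le_sup' g (Finset.mem_univ q.2))) ?_
  obtain ⟨i, -, hi⟩ := Finset.exists_mem_eq_sup' (Finset.univ_nonempty (α := ι)) f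
  obtain ⟨j, -, hj⟩ := Finset.exists_mem_eq_sup' (Finset.univ_nonempty (α := κ)) g
  rw [hi, hj]
  exact Finset.le_sup' (fun q : ι × κ => f q.1 + g q.2) (Finset.mem_univ (i, j))

lemma inf'_prod_mul {f : ι → ℝ} {g : κ → ℝ} (hf : ∀ i, 0 ≤ f i) (hg : ∀ j, 0 ≤ g j) :
    Finset.univ.inf' Finset.univ_nonempty (fun q : ι × κ => f q.1 * g q.2)
      = Finset.univ.inf' Finset.univ_nonempty f
        * Finset.univ.inf' Finset.univ_nonempty g := by
  refine le_antisymm ?_ (Finset.le_inf' _ _ fun q _ =>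
    mul_le_mul (Finset.inf'_le f (Finset.mem_univ q.1)) (Finset.inf'_le g (Finset.mem_univ q.2))
      (Finset.le_inf' _ _ fun j _ => hg j) (hf q.1))
  obtain ⟨i, -, hi⟩ := Finset.exists_mem_eq_inf' (Finset.univ_nonempty (α := ι)) f
  obtain ⟨j, -, hj⟩ := Finset.exists_mem_eq_inf' (Finset.univ_nonempty (α := κ)) g
  rw [hi, hj]
  exact Finset.inf'_le _ (Finset.mem_univ (i, j))

lemma sup'_prod_mul {f : ι → ℝ} {g : κ → ℝ} (hf : ∀ i, 0 ≤ f i) (hg : ∀ j, 0 ≤ g j) :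
    Finset.univ.sup' Finset.univ_nonempty (fun q : ι × κ => f q.1 * g q.2)
      = Finset.univ.sup' Finset.univ_nonempty f
        * Finset.univ.sup' Finset.univ_nonempty g := by
  refine le_antisymm (Finset.sup'_le _ _ fun q _ =>
    mul_le_mul (Finset.le_sup' f (Finset.mem_univ q.1)) (Finset.le_sup' g (Finset.mem_univ q.2))
      (hg q.2) (le_trans (hf q.1) (Finset.le_sup' f (Finset.mem_univ q.1)))) ?_
  obtain ⟨i, -, hi⟩ := Finset.exists_mem_eq_sup' (Finset.univ_nonempty (α := ι)) f
  obtain ⟨j, -, hj⟩ := Finset.exists_mem_eq_sup' (Finset.univ_nonempty (α := κ)) g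
  rw [hi, hj]
  exact Finset.le_sup' (fun q : ι × κ => f q.1 * g q.2) (Finset.mem_univ (i, j))

end Inf'

section Ops
variable {A B C D : Type} [Fintype A] [Fintype B] [Fintype C] [Fintype D]
  [Nonempty A] [Nonempty B] [Nonempty C] [Nonempty D]

lemma sum_strat_add {F : A → B → ℝ} {K : C → D → ℝ} {x : A → ℝ} {x' : C → ℝ}
    (hx : x ∈ stdSimplex ℝ A) (hx' : x' ∈ stdSimplex ℝ C) (b : B) (d : D) :
    ∑ p : A × C, (x p.1 * x' p.2) * (F p.1 b + K p.2 d)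
      = (∑ a : A, x a * F a b) + ∑ c : C, x' c * K c d := by
  rw [Fintype.sum_prod_type]
  have e : ∀ a : A, ∑ c : C, (x a * x' c) * (F a b + K c d)
      = (x a * F a b) * (∑ c : C, x' c) + x a * (∑ c : C, x' c * K c d) := by
    intro a
    rw [Finset.mul_sum, Finset.mul_sum, ← Finset.sum_add_distrib]
    exact Finset.sum_congr rfl fun c _ => by ring
  rw [Finset.sum_congr rfl fun a _ => e a]
  simp only [hx'.2, mul_one]
  rw [Finset.sum_add_distrib, ← Finset.sum_mul, hx.2, one_mul]

lemma sum_strat_mul {F : A → B → ℝ} {K : C → D → ℝ} (x : A → ℝ) (x' : C → ℝ) (b : B) (d : D) :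
    ∑ p : A × C, (x p.1 * x' p.2) * (F p.1 b * K p.2 d)
      = (∑ a : A, x a * F a b) * ∑ c : C, x' c * K c d := by
  rw [Fintype.sum_prod_type, Finset.sum_mul_sum]
  exact Finset.sum_congr rfl fun a _ => Finset.sum_congr rfl fun c _ => by ring

lemma sum_strat_add' {F : A → B → ℝ} {K : C → D → ℝ} {y : B → ℝ} {y' : D → ℝ}
    (hy : y ∈ stdSimplex ℝ B) (hy' : y' ∈ stdSimplex ℝ D) (a : A) (c : C) :
    ∑ q : B × D, (F a q.1 + K c q.2) * (y q.1 * y' q.2)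
      = (∑ b : B, F a b * y b) + ∑ d : D, K c d * y' d := by
  rw [Fintype.sum_prod_type]
  have e : ∀ b : B, ∑ d : D, (F a b + K c d) * (y b * y' d)
      = (F a b * y b) * (∑ d : D, y' d) + y b * (∑ d : D, K c d * y' d) := by
    intro b
    rw [Finset.mul_sum, Finset.mul_sum, ← Finset.sum_add_distrib]
    exact Finset.sum_congr rfl fun d _ => by ring
  rw [Finset.sum_congr rfl fun b _ => e b]
  simp only [hy'.2, mul_one]
  rw [Finset.sum_add_distrib, ← Finset.sum_mul, hy.2, one_mul]

lemma sum_strat_mul' {F : A → B → ℝ} {K : C → D → ℝ} (y : B → ℝ) (y' : D → ℝ) (a : A) (c : C) :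
    ∑ q : B × D, (F a q.1 * K c q.2) * (y q.1 * y' q.2)
      = (∑ b : B, F a b * y b) * ∑ d : D, K c d * y' d := by
  rw [Fintype.sum_prod_type, Finset.sum_mul_sum]
  exact Finset.sum_congr rfl fun b _ => Finset.sum_congr rfl fun d _ => by ring

theorem matrixValue_add (F : A → B → ℝ) (K : C → D → ℝ) :
    matrixValue (fun (p : A × C) (q : B × D) => F p.1 q.1 + K p.2 q.2)
      = matrixValue F + matrixValue K := by
  set M := fun (p : A × C) (q : B × D) => F p.1 q.1 + K p.2 q.2 with hM
  have hmin : ∀ (x : stdSimplex ℝ A) (x' : stdSimplex ℝ C),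
      minRow M (fun p => x.1 p.1 * x'.1 p.2) = minRow F x.1 + minRow K x'.1 := by
    intro x x'
    unfold minRow
    rw [show (fun q : B × D => ∑ p : A × C, (x.1 p.1 * x'.1 p.2) * M p q)
        = fun q : B × D => (∑ a : A, x.1 a * F a q.1) + ∑ c : C, x'.1 c * K c q.2 from
      funext fun q => sum_strat_add x.2 x'.2 q.1 q.2]
    exact inf'_prod_add (fun b => ∑ a : A, x.1 a * F a b) (fun d => ∑ c : C, x'.1 c * K c d)
  have hmax : ∀ (y : stdSimplex ℝ B) (y' : stdSimplex ℝ D),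
      maxCol M (fun q => y.1 q.1 * y'.1 q.2) = maxCol F y.1 + maxCol K y'.1 := by
    intro y y'
    unfold maxCol
    rw [show (fun p : A × C => ∑ q : B × D, M p q * (y.1 q.1 * y'.1 q.2))
        = fun p : A × C => (∑ b : B, F p.1 b * y.1 b) + ∑ d : D, K p.2 d * y'.1 d from
      funext fun p => sum_strat_add' y.2 y'.2 p.1 p.2]
    exact sup'_prod_add (fun a => ∑ b : B, F a b * y.1 b) (fun c => ∑ d : D, K c d * y'.1 d)
  refine le_antisymm ?_ ?_
  · rw [matrixValue_eq_upperVal M, matrixValue_eq_upperVal F, matrixValue_eq_upperVal K]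
    unfold upperVal
    exact inf_add_combine fun y y' => le_trans
      (ciInf_le (bddBelow_maxCol M) (⟨_, prod_mem_stdSimplex y.2 y'.2⟩ : stdSimplex ℝ (B × D)))
      (le_of_eq (hmax y y'))
  · rw [matrixValue_eq_lowerVal M, matrixValue_eq_lowerVal F, matrixValue_eq_lowerVal K]
    unfold lowerVal
    exact sup_add_combine fun x x' => le_trans (le_of_eq (hmin x x').symm)
      (le_ciSup (bddAbove_minRow M) (⟨_, prod_mem_stdSimplex x.2 x'.2⟩ : stdSimplex ℝ (A × C)))

theorem matrixValue_tensor {F : A → B → ℝ} {K : C → D → ℝ}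
    (hF : ∀ a b, 0 ≤ F a b) (hK : ∀ c d, 0 ≤ K c d) :
    matrixValue (fun (p : A × C) (q : B × D) => F p.1 q.1 * K p.2 q.2)
      = matrixValue F * matrixValue K := by
  set M := fun (p : A × C) (q : B × D) => F p.1 q.1 * K p.2 q.2 with hM
  have hmin : ∀ (x : stdSimplex ℝ A) (x' : stdSimplex ℝ C),
      minRow M (fun p => x.1 p.1 * x'.1 p.2) = minRow F x.1 * minRow K x'.1 := by
    intro x x'
    unfold minRow
    rw [show (fun q : B × D => ∑ p : A × C, (x.1 p.1 * x'.1 p.2) * M p q)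
        = fun q : B × D => (∑ a : A, x.1 a * F a q.1) * ∑ c : C, x'.1 c * K c q.2 from
      funext fun q => sum_strat_mul x.1 x'.1 q.1 q.2]
    exact inf'_prod_mul
      (fun b => Finset.sum_nonneg fun a _ => mul_nonneg (x.2.1 a) (hF a b))
      (fun d => Finset.sum_nonneg fun c _ => mul_nonneg (x'.2.1 c) (hK c d))
  have hmax : ∀ (y : stdSimplex ℝ B) (y' : stdSimplex ℝ D),
      maxCol M (fun q => y.1 q.1 * y'.1 q.2) = maxCol F y.1 * maxCol K y'.1 := by
    intro y y'
    unfold maxCol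
    rw [show (fun p : A × C => ∑ q : B × D, M p q * (y.1 q.1 * y'.1 q.2))
        = fun p : A × C => (∑ b : B, F p.1 b * y.1 b) * ∑ d : D, K p.2 d * y'.1 d from
      funext fun p => sum_strat_mul' y.1 y'.1 p.1 p.2]
    exact sup'_prod_mul
      (fun a => Finset.sum_nonneg fun b _ => mul_nonneg (hF a b) (y.2.1 b))
      (fun c => Finset.sum_nonneg fun d _ => mul_nonneg (hK c d) (y'.2.1 d))
  have hminF : ∀ x : stdSimplex ℝ A, 0 ≤ minRow F x.1 := fun x =>
    Finset.le_inf' _ _ fun b _ => Finset.sum_nonneg fun a _ => mul_nonneg (x.2.1 a) (hF a b)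
  have hminK : ∀ x' : stdSimplex ℝ C, 0 ≤ minRow K x'.1 := fun x' =>
    Finset.le_inf' _ _ fun d _ => Finset.sum_nonneg fun c _ => mul_nonneg (x'.2.1 c) (hK c d)
  have hmaxF : ∀ y : stdSimplex ℝ B, 0 ≤ maxCol F y.1 := by
    intro y
    obtain ⟨a₀⟩ := (inferInstance : Nonempty A)
    exact le_trans (Finset.sum_nonneg fun b _ => mul_nonneg (hF a₀ b) (y.2.1 b))
      (Finset.le_sup' (fun a => ∑ b : B, F a b * y.1 b) (Finset.mem_univ a₀))
  have hmaxK : ∀ y' : stdSimplex ℝ D, 0 ≤ maxCol K y'.1 := by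
    intro y'
    obtain ⟨c₀⟩ := (inferInstance : Nonempty C)
    exact le_trans (Finset.sum_nonneg fun d _ => mul_nonneg (hK c₀ d) (y'.2.1 d))
      (Finset.le_sup' (fun c => ∑ d : D, K c d * y'.1 d) (Finset.mem_univ c₀))
  refine le_antisymm ?_ ?_
  · rw [matrixValue_eq_upperVal M, matrixValue_eq_upperVal F, matrixValue_eq_upperVal K]
    unfold upperVal
    exact inf_mul_combine hmaxF hmaxK fun y y' => le_trans
      (ciInf_le (bddBelow_maxCol M) (⟨_, prod_mem_stdSimplex y.2 y'.2⟩ : stdSimplex ℝ (B × D)))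
      (le_of_eq (hmax y y'))
  · rw [matrixValue_eq_lowerVal M, matrixValue_eq_lowerVal F, matrixValue_eq_lowerVal K]
    unfold lowerVal
    exact sup_mul_combine hminF hminK (bddAbove_minRow F) (bddAbove_minRow K)
      fun x x' => le_trans (le_of_eq (hmin x x').symm)
        (le_ciSup (bddAbove_minRow M) (⟨_, prod_mem_stdSimplex x.2 x'.2⟩ : stdSimplex ℝ (A × C)))

theorem matrixValue_negT (F : A → B → ℝ) :
    matrixValue (fun (b : B) (a : A) => -F a b) = -matrixValue F := by
  rw [matrixValue_eq_lowerVal (fun (b : B) (a : A) => -F a b), matrixValue_eq_upperVal F]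
  have h1 : ∀ y : stdSimplex ℝ B, minRow (fun (b : B) (a : A) => -F a b) y.1
      = -maxCol F y.1 := by
    intro y
    unfold minRow maxCol
    rw [show (fun a : A => ∑ b : B, y.1 b * -F a b)
        = fun a : A => -∑ b : B, F a b * y.1 b from
      funext fun a => by rw [← Finset.sum_neg_distrib]; exact Finset.sum_congr rfl fun b _ => by ring]
    exact inf'_neg_eq _
  unfold lowerVal upperVal
  simp only [h1]
  have bdd : BddAbove (Set.range fun y : stdSimplex ℝ B => -maxCol F y.1) := by
    obtain ⟨m, hm⟩ := bddBelow_maxCol F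
    exact ⟨-m, by rintro r ⟨y, rfl⟩; exact neg_le_neg (hm ⟨y, rfl⟩)⟩
  refine le_antisymm (ciSup_le fun y => neg_le_neg (ciInf_le (bddBelow_maxCol F) y)) ?_
  rw [neg_le]
  exact le_ciInf fun y => neg_le.1 (le_ciSup bdd y)

theorem matrixValue_smul (F : A → B → ℝ) {c : ℝ} (hc : 0 < c) :
    matrixValue (fun a b => c * F a b) = c * matrixValue F := by
  rw [matrixValue_eq_lowerVal (fun a b => c * F a b), matrixValue_eq_lowerVal F]
  have h1 : ∀ x : stdSimplex ℝ A, minRow (fun a b => c * F a b) x.1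
      = c * minRow F x.1 := by
    intro x
    unfold minRow
    rw [show (fun b : B => ∑ a : A, x.1 a * (c * F a b))
        = fun b : B => c * ∑ a : A, x.1 a * F a b from
      funext fun b => by rw [Finset.mul_sum]; exact Finset.sum_congr rfl fun a _ => by ring]
    exact inf'_const_mul _ hc.le
  unfold lowerVal
  simp only [h1]
  have bdd' : BddAbove (Set.range fun x : stdSimplex ℝ A => c * minRow F x.1) := by
    obtain ⟨m, hm⟩ := bddAbove_minRow F
    refine ⟨c * m, ?_⟩
    rintro r ⟨x, rfl⟩
    exact mul_le_mul_of_nonneg_left (hm ⟨x, rfl⟩) hc.le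
  refine le_antisymm
    (ciSup_le fun x => mul_le_mul_of_nonneg_left (le_ciSup (bddAbove_minRow F) x) hc.le) ?_
  have h2 : (⨆ x : stdSimplex ℝ A, minRow F x.1)
      ≤ (⨆ x : stdSimplex ℝ A, c * minRow F x.1) / c :=
    ciSup_le fun x => (le_div_iff₀ hc).2 (by rw [mul_comm]; exact le_ciSup bdd' x)
  have h3 := (le_div_iff₀ hc).1 h2
  linarith

theorem matrixValue_add_const (F : A → B → ℝ) (c : ℝ) :
    matrixValue (fun a b => F a b + c) = matrixValue F + c := by
  rw [matrixValue_eq_lowerVal (fun a b => F a b + c), matrixValue_eq_lowerVal F]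
  have h1 : ∀ x : stdSimplex ℝ A, minRow (fun a b => F a b + c) x.1
      = minRow F x.1 + c := by
    intro x
    unfold minRow
    rw [show (fun b : B => ∑ a : A, x.1 a * (F a b + c))
        = fun b : B => (∑ a : A, x.1 a * F a b) + c from funext fun b => by
      rw [show (fun a : A => x.1 a * (F a b + c)) = fun a : A => x.1 a * F a b + x.1 a * c from
          funext fun a => by ring,
        Finset.sum_add_distrib, ← Finset.sum_mul, x.2.2, one_mul]]
    exact inf'_add_const _ c
  unfold lowerVal
  simp only [h1]
  have bdd' : BddAbove (Set.range fun x : stdSimplex ℝ A => minRow F x.1 + c) := by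
    obtain ⟨m, hm⟩ := bddAbove_minRow F
    exact ⟨m + c, by rintro r ⟨x, rfl⟩; exact add_le_add_left (hm ⟨x, rfl⟩) c⟩
  refine le_antisymm
    (ciSup_le fun x => add_le_add_left (le_ciSup (bddAbove_minRow F) x) c) ?_
  have h2 : (⨆ x : stdSimplex ℝ A, minRow F x.1)
      ≤ (⨆ x : stdSimplex ℝ A, (minRow F x.1 + c)) - c :=
    ciSup_le fun x => le_sub_iff_add_le.2 (le_ciSup bdd' x)
  linarith

theorem matrixValue_const (c : ℝ) :
    matrixValue (fun (_ : A) (_ : B) => c) = c := by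
  rw [matrixValue_eq_lowerVal (fun (_ : A) (_ : B) => c)]
  have h1 : ∀ x : stdSimplex ℝ A, minRow (fun (_ : A) (_ : B) => c) x.1 = c := by
    intro x
    unfold minRow
    rw [show (fun _ : B => ∑ a : A, x.1 a * c) = fun _ : B => c from
      funext fun b => by rw [← Finset.sum_mul, x.2.2, one_mul]]
    exact Finset.inf'_const _ _
  unfold lowerVal
  simp only [h1]
  exact ciSup_const

end Ops

theorem key_combination {A B C D : Type} [Fintype A] [Fintype B] [Fintype C] [Fintype D]
    [Nonempty A] [Nonempty B] [Nonempty C] [Nonempty D]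
    (F : A → B → ℝ) (K : C → D → ℝ) {s t : ℝ}
    (hs : ∀ a b, 0 ≤ F a b + s) (ht : ∀ c d, 0 ≤ K c d + t)
    (hs0 : 0 < s) (ht0 : 0 < t) :
    matrixValue (fun (p : (A × C) × (D × (B × Unit))) (q : (B × D) × (C × (A × Unit))) =>
      (F p.1.1 q.1.1 + s) * (K p.1.2 q.1.2 + t)
        + (-(s * K q.2.1 p.2.1) + (-(t * F q.2.2.1 p.2.2.1) + -(s * t))))
      = matrixValue F * matrixValue K := by
  set F₁ : (A × C) → (B × D) → ℝ := fun p q => (F p.1 q.1 + s) * (K p.2 q.2 + t) with hF₁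
  set F₂ : D → C → ℝ := fun d c => -(s * K c d) with hF₂
  set F₃ : B → A → ℝ := fun b a => -(t * F a b) with hF₃
  set F₄ : Unit → Unit → ℝ := fun _ _ => -(s * t) with hF₄
  have step0 : matrixValue (fun (p : (A × C) × (D × (B × Unit))) (q : (B × D) × (C × (A × Unit))) =>
      (F p.1.1 q.1.1 + s) * (K p.1.2 q.1.2 + t)
        + (-(s * K q.2.1 p.2.1) + (-(t * F q.2.2.1 p.2.2.1) + -(s * t))))
      = matrixValue F₁
        + (matrixValue F₂ + (matrixValue F₃ + matrixValue F₄)) := by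
    have h2 : matrixValue (fun (p : B × Unit) (q : A × Unit) => F₃ p.1 q.1 + F₄ p.2 q.2)
        = matrixValue F₃ + matrixValue F₄ := matrixValue_add F₃ F₄
    have h1 : matrixValue (fun (p : D × (B × Unit)) (q : C × (A × Unit)) =>
        F₂ p.1 q.1 + (F₃ p.2.1 q.2.1 + F₄ p.2.2 q.2.2))
        = matrixValue F₂ + (matrixValue F₃ + matrixValue F₄) := by
      rw [show (fun (p : D × (B × Unit)) (q : C × (A × Unit)) =>
          F₂ p.1 q.1 + (F₃ p.2.1 q.2.1 + F₄ p.2.2 q.2.2))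
        = fun (p : D × (B × Unit)) (q : C × (A × Unit)) =>
          F₂ p.1 q.1 + (fun (p' : B × Unit) (q' : A × Unit) => F₃ p'.1 q'.1 + F₄ p'.2 q'.2) p.2 q.2
          from rfl]
      rw [matrixValue_add F₂ (fun (p' : B × Unit) (q' : A × Unit) => F₃ p'.1 q'.1 + F₄ p'.2 q'.2),
        h2]
    rw [show (fun (p : (A × C) × (D × (B × Unit))) (q : (B × D) × (C × (A × Unit))) =>
        (F p.1.1 q.1.1 + s) * (K p.1.2 q.1.2 + t)
          + (-(s * K q.2.1 p.2.1) + (-(t * F q.2.2.1 p.2.2.1) + -(s * t))))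
      = fun (p : (A × C) × (D × (B × Unit))) (q : (B × D) × (C × (A × Unit))) =>
        F₁ p.1 q.1 + (fun (p' : D × (B × Unit)) (q' : C × (A × Unit)) =>
          F₂ p'.1 q'.1 + (F₃ p'.2.1 q'.2.1 + F₄ p'.2.2 q'.2.2)) p.2 q.2 from rfl]
    rw [matrixValue_add F₁ (fun (p' : D × (B × Unit)) (q' : C × (A × Unit)) =>
      F₂ p'.1 q'.1 + (F₃ p'.2.1 q'.2.1 + F₄ p'.2.2 q'.2.2)), h1]
  rw [step0]
  have hv1 : matrixValue F₁ = (matrixValue F + s) * (matrixValue K + t) := by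
    rw [show F₁ = fun p q => (fun a b => F a b + s) p.1 q.1 * (fun c d => K c d + t) p.2 q.2
        from rfl]
    rw [matrixValue_tensor (fun a b => hs a b) (fun c d => ht c d),
      matrixValue_add_const F s, matrixValue_add_const K t]
  have hv2 : matrixValue F₂ = -(s * matrixValue K) := by
    rw [show F₂ = fun (d : D) (c : C) => -((fun c' d' => s * K c' d') c d) from rfl]
    rw [matrixValue_negT (fun c' d' => s * K c' d'), matrixValue_smul K hs0]
  have hv3 : matrixValue F₃ = -(t * matrixValue F) := by
    rw [show F₃ = fun (b : B) (a : A) => -((fun a' b' => t * F a' b') a b) from rfl]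
    rw [matrixValue_negT (fun a' b' => t * F a' b'), matrixValue_smul F ht0]
  have hv4 : matrixValue F₄ = -(s * t) := matrixValue_const _
  rw [hv1, hv2, hv3, hv4]
  ring

/-- `u ∈ 𝒱`: `u` is the value function of some two-player zero-sum polynomial game,
i.e. there are finite nonempty strategy sets `A`, `B` and a matrix `G` of real polynomials
such that `u z` is the value of the matrix game `G` evaluated at `z`, for every `z`. -/
def InV (u : ℝ → ℝ) : Prop :=
  ∃ (A B : Type) (iA : Fintype A) (iB : Fintype B), Nonempty A ∧ Nonempty B ∧
    ∃ G : A → B → Polynomial ℝ,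
      ∀ z : ℝ, u z = @matrixValue A B iA iB fun a b => (G a b).eval z

/-- If `u` and `w` are value functions of polynomial games, then so is the pointwise
product `z ↦ u z * w z`. -/
theorem InV.mul (u w : ℝ → ℝ) (hu : InV u) (hw : InV w) :
    InV (fun z => u z * w z) := by
  obtain ⟨A, B, iA, iB, hA, hB, G, hG⟩ := hu
  obtain ⟨C, D, iC, iD, hC, hD, H, hH⟩ := hw
  letI := iA; letI := iB; letI := iC; letI := iD
  haveI := hA; haveI := hB; haveI := hC; haveI := hD
  set S : Polynomial ℝ := 1 + ∑ a : A, ∑ b : B, (G a b) ^ 2 with hSdef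
  set T : Polynomial ℝ := 1 + ∑ c : C, ∑ d : D, (H c d) ^ 2 with hTdef
  refine ⟨(A × C) × (D × (B × Unit)), (B × D) × (C × (A × Unit)), inferInstance, inferInstance,
    inferInstance, inferInstance,
    fun p q => (G p.1.1 q.1.1 + S) * (H p.1.2 q.1.2 + T)
      + (-(S * H q.2.1 p.2.1) + (-(T * G q.2.2.1 p.2.2.1) + -(S * T))), fun z => ?_⟩
  have hSeval : S.eval z = 1 + ∑ a : A, ∑ b : B, ((G a b).eval z) ^ 2 := by
    simp [hSdef, eval_finset_sum]
  have hTeval : T.eval z = 1 + ∑ c : C, ∑ d : D, ((H c d).eval z) ^ 2 := by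
    simp [hTdef, eval_finset_sum]
  have hs0 : 0 < S.eval z := by
    rw [hSeval]
    have : 0 ≤ ∑ a : A, ∑ b : B, ((G a b).eval z) ^ 2 :=
      Finset.sum_nonneg fun a _ => Finset.sum_nonneg fun b _ => sq_nonneg _
    linarith
  have ht0 : 0 < T.eval z := by
    rw [hTeval]
    have : 0 ≤ ∑ c : C, ∑ d : D, ((H c d).eval z) ^ 2 :=
      Finset.sum_nonneg fun c _ => Finset.sum_nonneg fun d _ => sq_nonneg _
    linarith
  have hs : ∀ a b, 0 ≤ (G a b).eval z + S.eval z := by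
    intro a b
    have h1 : ((G a b).eval z) ^ 2 ≤ ∑ b' : B, ((G a b').eval z) ^ 2 :=
      Finset.single_le_sum (f := fun b' => ((G a b').eval z) ^ 2) (fun b' _ => sq_nonneg _) (Finset.mem_univ b)
    have h2 : (∑ b' : B, ((G a b').eval z) ^ 2) ≤ ∑ a' : A, ∑ b' : B, ((G a' b').eval z) ^ 2 :=
      Finset.single_le_sum (f := fun a' => ∑ b' : B, ((G a' b').eval z) ^ 2)
        (fun a' _ => Finset.sum_nonneg fun b' _ => sq_nonneg _) (Finset.mem_univ a)
    rw [hSeval]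
    nlinarith [sq_nonneg ((G a b).eval z + 1)]
  have ht : ∀ c d, 0 ≤ (H c d).eval z + T.eval z := by
    intro c d
    have h1 : ((H c d).eval z) ^ 2 ≤ ∑ d' : D, ((H c d').eval z) ^ 2 :=
      Finset.single_le_sum (f := fun d' => ((H c d').eval z) ^ 2) (fun d' _ => sq_nonneg _) (Finset.mem_univ d)
    have h2 : (∑ d' : D, ((H c d').eval z) ^ 2) ≤ ∑ c' : C, ∑ d' : D, ((H c' d').eval z) ^ 2 :=
      Finset.single_le_sum (f := fun c' => ∑ d' : D, ((H c' d').eval z) ^ 2)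
        (fun c' _ => Finset.sum_nonneg fun d' _ => sq_nonneg _) (Finset.mem_univ c)
    rw [hTeval]
    nlinarith [sq_nonneg ((H c d).eval z + 1)]
  have heval : (fun (p : (A × C) × (D × (B × Unit))) (q : (B × D) × (C × (A × Unit))) =>
      (((G p.1.1 q.1.1 + S) * (H p.1.2 q.1.2 + T)
        + (-(S * H q.2.1 p.2.1) + (-(T * G q.2.2.1 p.2.2.1) + -(S * T)))).eval z))
      = fun (p : (A × C) × (D × (B × Unit))) (q : (B × D) × (C × (A × Unit))) =>
        ((fun a b => (G a b).eval z) p.1.1 q.1.1 + S.eval z)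
          * ((fun c d => (H c d).eval z) p.1.2 q.1.2 + T.eval z)
        + (-(S.eval z * (fun c d => (H c d).eval z) q.2.1 p.2.1)
          + (-(T.eval z * (fun a b => (G a b).eval z) q.2.2.1 p.2.2.1)
            + -(S.eval z * T.eval z))) := by
    funext p q
    simp [eval_add, eval_mul, eval_neg]
  rw [heval,
    key_combination (fun a b => (G a b).eval z) (fun c d => (H c d).eval z) hs ht hs0 ht0,
    ← hG z, ← hH z]
end

section
/- Let G_u be an A_u × B_u real matrix and G_w an A_w × B_w real matrix (with A_u, B_u, A_w, B_w finite nonempty sets), and define the sum game G on strategy sets A = A_u × A_w and B = B_u × B_w by G_{(a_u,a_w),(b_u,b_w)} = G_u(a_u,b_u) + G_w(a_w,b_w). Then val(G) = val(G_u) + val(G_w). -/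
open Polynomial

section helpers
variable {A B : Type} [Fintype A] [Fintype B]

/-- payoff abbreviation -/
noncomputable def pay (G : A → B → ℝ) (x : stdSimplex ℝ A) (y : stdSimplex ℝ B) : ℝ :=
  ∑ a : A, ∑ b : B, x.1 a * G a b * y.1 b

instance [Nonempty A] : Nonempty (stdSimplex ℝ A) := by
  classical exact ⟨⟨_, single_mem_stdSimplex ℝ (Classical.arbitrary A)⟩⟩

lemma simplex_le_one {x : A → ℝ} (hx : x ∈ stdSimplex ℝ A) (a : A) : x a ≤ 1 := by
  calc x a ≤ ∑ a', x a' := Finset.single_le_sum (fun i _ => hx.1 i) (Finset.mem_univ a)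
  _ = 1 := hx.2

lemma pay_abs_le (G : A → B → ℝ) (x : stdSimplex ℝ A) (y : stdSimplex ℝ B) :
    |pay G x y| ≤ ∑ a : A, ∑ b : B, |G a b| := by
  refine (Finset.abs_sum_le_sum_abs _ _).trans (Finset.sum_le_sum fun a _ => ?_)
  refine (Finset.abs_sum_le_sum_abs _ _).trans (Finset.sum_le_sum fun b _ => ?_)
  rw [abs_mul, abs_mul]
  have hx1 : |x.1 a| ≤ 1 := by rw [abs_of_nonneg (x.2.1 a)]; exact simplex_le_one x.2 a
  have hy1 : |y.1 b| ≤ 1 := by rw [abs_of_nonneg (y.2.1 b)]; exact simplex_le_one y.2 b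
  calc |x.1 a| * |G a b| * |y.1 b| ≤ 1 * |G a b| * 1 :=
        mul_le_mul (mul_le_mul hx1 le_rfl (abs_nonneg _) zero_le_one) hy1 (abs_nonneg _)
          (by positivity)
  _ = |G a b| := by ring

lemma bddBelow_pay (G : A → B → ℝ) (x : stdSimplex ℝ A) :
    BddBelow (Set.range fun y : stdSimplex ℝ B => pay G x y) := by
  refine ⟨-(∑ a : A, ∑ b : B, |G a b|), ?_⟩
  rintro _ ⟨y, rfl⟩
  exact neg_le_of_abs_le (pay_abs_le G x y)

lemma bddAbove_inf [Nonempty B] (G : A → B → ℝ) :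
    BddAbove (Set.range fun x : stdSimplex ℝ A => ⨅ y : stdSimplex ℝ B, pay G x y) := by
  refine ⟨∑ a : A, ∑ b : B, |G a b|, ?_⟩
  rintro _ ⟨x, rfl⟩
  exact (ciInf_le (bddBelow_pay G x) (Classical.arbitrary _)).trans
    (le_of_abs_le (pay_abs_le G x _))

lemma matrixValue_eq (G : A → B → ℝ) :
    matrixValue G = ⨆ x : stdSimplex ℝ A, ⨅ y : stdSimplex ℝ B, pay G x y := rfl

end helpers


section tensor
variable {A B : Type} [Fintype A] [Fintype B]

/-- product distribution -/
noncomputable def tensorS (x : stdSimplex ℝ A) (y : stdSimplex ℝ B) : stdSimplex ℝ (A × B) := by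
  refine ⟨fun p => x.1 p.1 * y.1 p.2, fun p => mul_nonneg (x.2.1 p.1) (y.2.1 p.2), ?_⟩
  rw [Fintype.sum_prod_type]
  simp only [← Finset.mul_sum]
  rw [← Finset.sum_mul, x.2.2, y.2.2, one_mul]

/-- first marginal -/
noncomputable def margL (y : stdSimplex ℝ (A × B)) : stdSimplex ℝ A := by
  refine ⟨fun b1 => ∑ b2 : B, y.1 (b1, b2),
    fun b1 => Finset.sum_nonneg fun b2 _ => y.2.1 (b1, b2), ?_⟩
  rw [← Fintype.sum_prod_type]
  exact y.2.2

/-- second marginal -/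
noncomputable def margR (y : stdSimplex ℝ (A × B)) : stdSimplex ℝ B := by
  refine ⟨fun b2 => ∑ b1 : A, y.1 (b1, b2),
    fun b2 => Finset.sum_nonneg fun b1 _ => y.2.1 (b1, b2), ?_⟩
  rw [← Fintype.sum_prod_type_right]
  exact y.2.2

end tensor


section decomp
variable {Au Bu Aw Bw : Type} [Fintype Au] [Fintype Bu] [Fintype Aw] [Fintype Bw]

lemma pay_eq_col (G : Au → Bu → ℝ) (x : stdSimplex ℝ Au) (y : stdSimplex ℝ Bu) :
    pay G x y = ∑ b : Bu, (∑ a : Au, x.1 a * G a b) * y.1 b := by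
  rw [pay, Finset.sum_comm]
  simp [Finset.sum_mul]

lemma pay_eq_row (G : Au → Bu → ℝ) (x : stdSimplex ℝ Au) (y : stdSimplex ℝ Bu) :
    pay G x y = ∑ a : Au, x.1 a * (∑ b : Bu, G a b * y.1 b) := by
  simp [pay, Finset.mul_sum, mul_assoc]

lemma decompL (Gu : Au → Bu → ℝ) (Gw : Aw → Bw → ℝ)
    (xu : stdSimplex ℝ Au) (xw : stdSimplex ℝ Aw) (y : stdSimplex ℝ (Bu × Bw)) :
    pay (fun (a : Au × Aw) (b : Bu × Bw) => Gu a.1 b.1 + Gw a.2 b.2) (tensorS xu xw) y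
      = pay Gu xu (margL y) + pay Gw xw (margR y) := by
  have key : ∀ b1 b2, (∑ a : Au × Aw, (tensorS xu xw).1 a * (Gu a.1 b1 + Gw a.2 b2))
      = (∑ a1, xu.1 a1 * Gu a1 b1) + (∑ a2, xw.1 a2 * Gw a2 b2) := by
    intro b1 b2
    rw [Fintype.sum_prod_type]
    simp only [tensorS, mul_add, Finset.sum_add_distrib]
    congr 1
    · have h1 : ∀ a1 : Au, ∑ a2 : Aw, xu.1 a1 * xw.1 a2 * Gu a1 b1
          = xu.1 a1 * Gu a1 b1 := by
        intro a1
        rw [show (fun a2 => xu.1 a1 * xw.1 a2 * Gu a1 b1)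
            = fun a2 => (xu.1 a1 * Gu a1 b1) * xw.1 a2 from funext fun a2 => by ring,
          ← Finset.mul_sum, xw.2.2, mul_one]
      simp only [h1]
    · have h2 : ∀ a2 : Aw, ∑ a1 : Au, xu.1 a1 * xw.1 a2 * Gw a2 b2
          = xw.1 a2 * Gw a2 b2 := by
        intro a2
        rw [show (fun a1 => xu.1 a1 * xw.1 a2 * Gw a2 b2)
            = fun a1 => (xw.1 a2 * Gw a2 b2) * xu.1 a1 from funext fun a1 => by ring,
          ← Finset.mul_sum, xu.2.2, mul_one]
      rw [Finset.sum_comm]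
      simp only [h2]
  rw [pay_eq_col, pay_eq_col, pay_eq_col]
  simp only [key, add_mul, Finset.sum_add_distrib]
  congr 1
  · rw [Fintype.sum_prod_type]
    refine Finset.sum_congr rfl fun b1 _ => ?_
    simp [margL, Finset.mul_sum]
  · rw [Fintype.sum_prod_type_right]
    refine Finset.sum_congr rfl fun b2 _ => ?_
    simp [margR, Finset.mul_sum]

lemma decompR (Gu : Au → Bu → ℝ) (Gw : Aw → Bw → ℝ)
    (x : stdSimplex ℝ (Au × Aw)) (yu : stdSimplex ℝ Bu) (yw : stdSimplex ℝ Bw) :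
    pay (fun (a : Au × Aw) (b : Bu × Bw) => Gu a.1 b.1 + Gw a.2 b.2) x (tensorS yu yw)
      = pay Gu (margL x) yu + pay Gw (margR x) yw := by
  have key : ∀ a1 a2, (∑ b : Bu × Bw, (Gu a1 b.1 + Gw a2 b.2) * (tensorS yu yw).1 b)
      = (∑ b1, Gu a1 b1 * yu.1 b1) + (∑ b2, Gw a2 b2 * yw.1 b2) := by
    intro a1 a2
    rw [Fintype.sum_prod_type]
    simp only [tensorS, add_mul, Finset.sum_add_distrib]
    congr 1
    · have h1 : ∀ b1 : Bu, ∑ b2 : Bw, Gu a1 b1 * (yu.1 b1 * yw.1 b2)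
          = Gu a1 b1 * yu.1 b1 := by
        intro b1
        rw [show (fun b2 => Gu a1 b1 * (yu.1 b1 * yw.1 b2))
            = fun b2 => (Gu a1 b1 * yu.1 b1) * yw.1 b2 from funext fun b2 => by ring,
          ← Finset.mul_sum, yw.2.2, mul_one]
      simp only [h1]
    · have h2 : ∀ b2 : Bw, ∑ b1 : Bu, Gw a2 b2 * (yu.1 b1 * yw.1 b2)
          = Gw a2 b2 * yw.1 b2 := by
        intro b2
        rw [show (fun b1 => Gw a2 b2 * (yu.1 b1 * yw.1 b2))
            = fun b1 => (Gw a2 b2 * yw.1 b2) * yu.1 b1 from funext fun b1 => by ring,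
          ← Finset.mul_sum, yu.2.2, mul_one]
      rw [Finset.sum_comm]
      simp only [h2]
  rw [pay_eq_row, pay_eq_row, pay_eq_row]
  simp only [key, mul_add, Finset.sum_add_distrib]
  congr 1
  · rw [Fintype.sum_prod_type]
    refine Finset.sum_congr rfl fun a1 _ => ?_
    simp [margL, Finset.sum_mul]
  · rw [Fintype.sum_prod_type_right]
    refine Finset.sum_congr rfl fun a2 _ => ?_
    simp [margR, Finset.sum_mul]

end decomp

/-- The value of the sum game, in which the players play two matrix games simultaneously
and the payoff is the sum of the two payoffs, is the sum of the two values. -/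
theorem matrixValue_sum_game {Au Bu Aw Bw : Type}
    [Fintype Au] [Fintype Bu] [Fintype Aw] [Fintype Bw]
    [Nonempty Au] [Nonempty Bu] [Nonempty Aw] [Nonempty Bw]
    (Gu : Au → Bu → ℝ) (Gw : Aw → Bw → ℝ) :
    matrixValue (fun (a : Au × Aw) (b : Bu × Bw) => Gu a.1 b.1 + Gw a.2 b.2) =
      matrixValue Gu + matrixValue Gw := by
  set G : Au × Aw → Bu × Bw → ℝ := fun a b => Gu a.1 b.1 + Gw a.2 b.2 with hG
  rw [matrixValue_eq, matrixValue_eq, matrixValue_eq]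
  apply le_antisymm
  · apply ciSup_le
    intro x
    have step1 : ∀ (yu : stdSimplex ℝ Bu) (yw : stdSimplex ℝ Bw),
        (⨅ y : stdSimplex ℝ (Bu × Bw), pay G x y) ≤ pay Gu (margL x) yu + pay Gw (margR x) yw :=
      fun yu yw => (ciInf_le (bddBelow_pay G x) (tensorS yu yw)).trans_eq
        (decompR Gu Gw x yu yw)
    have h1 : ∀ yw, (⨅ y : stdSimplex ℝ (Bu × Bw), pay G x y) - pay Gw (margR x) yw
        ≤ ⨅ yu : stdSimplex ℝ Bu, pay Gu (margL x) yu :=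
      fun yw => le_ciInf fun yu => sub_le_iff_le_add.2 (step1 yu yw)
    have h2 : (⨅ y : stdSimplex ℝ (Bu × Bw), pay G x y)
        ≤ (⨅ yu : stdSimplex ℝ Bu, pay Gu (margL x) yu)
          + (⨅ yw : stdSimplex ℝ Bw, pay Gw (margR x) yw) := by
      rw [← sub_le_iff_le_add']
      exact le_ciInf fun yw => sub_le_comm.1 (h1 yw)
    refine h2.trans (add_le_add ?_ ?_)
    · exact le_ciSup (bddAbove_inf Gu) (margL x)
    · exact le_ciSup (bddAbove_inf Gw) (margR x)
  · have key : ∀ (xu : stdSimplex ℝ Au) (xw : stdSimplex ℝ Aw),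
        (⨅ yu : stdSimplex ℝ Bu, pay Gu xu yu) + (⨅ yw : stdSimplex ℝ Bw, pay Gw xw yw)
          ≤ ⨆ x : stdSimplex ℝ (Au × Aw), ⨅ y : stdSimplex ℝ (Bu × Bw), pay G x y := by
      intro xu xw
      have h1 : (⨅ yu : stdSimplex ℝ Bu, pay Gu xu yu)
          + (⨅ yw : stdSimplex ℝ Bw, pay Gw xw yw)
          ≤ ⨅ y : stdSimplex ℝ (Bu × Bw), pay G (tensorS xu xw) y :=
        le_ciInf fun y => by
          rw [hG, decompL Gu Gw xu xw y]
          exact add_le_add (ciInf_le (bddBelow_pay Gu xu) (margL y))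
            (ciInf_le (bddBelow_pay Gw xw) (margR y))
      exact h1.trans (le_ciSup (bddAbove_inf G) (tensorS xu xw))
    have h3 : ∀ xw : stdSimplex ℝ Aw,
        (⨆ xu : stdSimplex ℝ Au, ⨅ yu : stdSimplex ℝ Bu, pay Gu xu yu)
          ≤ (⨆ x : stdSimplex ℝ (Au × Aw), ⨅ y : stdSimplex ℝ (Bu × Bw), pay G x y)
            - (⨅ yw : stdSimplex ℝ Bw, pay Gw xw yw) :=
      fun xw => ciSup_le fun xu => le_sub_iff_add_le.2 (key xu xw)
    exact add_le_of_le_sub_left (ciSup_le fun xw => le_sub_comm.1 (h3 xw))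
end
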